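/- Let X be a strongly zero-dimensional topological space and Y a metrizable space. Then every mapping f : X → Y having a base of zero sets which is a countable union of strongly functionally discrete families is of the first Baire class; that is, Σ₀^f(X,Y) ⊆ B₁(X,Y). -/

import Mathlib

open Set Filter Topology

def IsZeroSet {X : Type*} [TopologicalSpace X] (A : Set X) : Prop :=
  ∃ f : X → ℝ, Continuous f ∧ A = f ⁻¹' {0}

def IsCozeroSet {X : Type*} [TopologicalSpace X] (A : Set X) : Prop := IsZeroSet Aᶜ

def IsDiscreteFamily {X : Type*} [TopologicalSpace X] {ι : Type*} (U : ι → Set X) : Prop :=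
  ∀ x : X, ∃ V ∈ 𝓝 x, {i | (U i ∩ V).Nonempty}.Subsingleton

def IsSFDFamily {X : Type*} [TopologicalSpace X] {ι : Type*} (A : ι → Set X) : Prop :=
  ∃ U : ι → Set X, IsDiscreteFamily U ∧ (∀ i, IsCozeroSet (U i)) ∧ ∀ i, closure (A i) ⊆ U i

def IsSFDSetFamily {X : Type*} [TopologicalSpace X] (𝓐 : Set (Set X)) : Prop :=
  IsSFDFamily (fun A : 𝓐 => (A : Set X))

def IsBaseFor {X Y : Type*} [TopologicalSpace X] [TopologicalSpace Y]
    (𝓑 : Set (Set X)) (f : X → Y) : Prop :=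
  ∀ V : Set Y, IsOpen V → ∃ 𝓢 ⊆ 𝓑, f ⁻¹' V = ⋃₀ 𝓢

def FunctionallyFSigma {X : Type*} [TopologicalSpace X] (A : Set X) : Prop :=
  ∃ F : ℕ → Set X, (∀ n, IsZeroSet (F n)) ∧ A = ⋃ n, F n

def MemK1 {X Y : Type*} [TopologicalSpace X] [TopologicalSpace Y] (f : X → Y) : Prop :=
  ∀ V : Set Y, IsOpen V → FunctionallyFSigma (f ⁻¹' V)

def MemB1 {X Y : Type*} [TopologicalSpace X] [TopologicalSpace Y] (f : X → Y) : Prop :=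
  ∃ g : ℕ → X → Y, (∀ n, Continuous (g n)) ∧
    ∀ x, Tendsto (fun n => g n x) atTop (𝓝 (f x))

def MemSigmaF {X Y : Type*} [TopologicalSpace X] [TopologicalSpace Y] (f : X → Y) : Prop :=
  ∃ 𝓑 : ℕ → Set (Set X), (∀ n, IsSFDSetFamily (𝓑 n)) ∧ IsBaseFor (⋃ n, 𝓑 n) f

def MemSigmaF0 {X Y : Type*} [TopologicalSpace X] [TopologicalSpace Y] (f : X → Y) : Prop :=
  ∃ 𝓑 : ℕ → Set (Set X), (∀ n, IsSFDSetFamily (𝓑 n)) ∧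
    (∀ n, ∀ A ∈ 𝓑 n, IsZeroSet A) ∧ IsBaseFor (⋃ n, 𝓑 n) f

def CompletelySeparatedSets {X : Type*} [TopologicalSpace X] (A B : Set X) : Prop :=
  ∃ h : X → ℝ, Continuous h ∧ (∀ x, h x ∈ Icc (0:ℝ) 1) ∧
    (∀ x ∈ A, h x = 0) ∧ ∀ x ∈ B, h x = 1

def StronglyZeroDimensional (X : Type*) [TopologicalSpace X] : Prop :=
  ∀ A B : Set X, CompletelySeparatedSets A B → ∃ U : Set X, IsClopen U ∧ A ⊆ U ∧ U ⊆ Bᶜ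

def IsCSet {X : Type*} [TopologicalSpace X] (A : Set X) : Prop :=
  ∃ U : ℕ → Set X, (∀ n, IsClopen (U n)) ∧ A = ⋂ n, U n

def IsCSigmaSet {X : Type*} [TopologicalSpace X] (A : Set X) : Prop :=
  ∃ C : ℕ → Set X, (∀ n, IsCSet (C n)) ∧ A = ⋃ n, C n

def AlmostStronglyZeroDimensional (X : Type*) [TopologicalSpace X] : Prop :=
  ∀ A : Set X, IsZeroSet A → IsCSigmaSet A

def CountablyCompactIn {X : Type*} [TopologicalSpace X] (F : Set X) : Prop :=
  ∀ U : ℕ → Set X, (∀ n, IsOpen (U n)) → F ⊆ ⋃ n, U n →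
    ∃ s : Finset ℕ, F ⊆ ⋃ n ∈ s, U n


section Aux
variable {X : Type*} [TopologicalSpace X]

lemma isZeroSet_inter {A B : Set X} (hA : IsZeroSet A) (hB : IsZeroSet B) :
    IsZeroSet (A ∩ B) := by
  obtain ⟨p, hp, rfl⟩ := hA
  obtain ⟨q, hq, rfl⟩ := hB
  refine ⟨fun x => |p x| + |q x|, by fun_prop, ?_⟩
  ext x
  simp only [mem_inter_iff, mem_preimage, mem_singleton_iff]
  constructor
  · rintro ⟨h1, h2⟩; simp [h1, h2]
  · intro h
    have h1 : |p x| = 0 := by nlinarith [abs_nonneg (p x), abs_nonneg (q x)]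
    have h2 : |q x| = 0 := by nlinarith [abs_nonneg (p x), abs_nonneg (q x)]
    exact ⟨abs_eq_zero.mp h1, abs_eq_zero.mp h2⟩

lemma isZeroSet_union {A B : Set X} (hA : IsZeroSet A) (hB : IsZeroSet B) :
    IsZeroSet (A ∪ B) := by
  obtain ⟨p, hp, rfl⟩ := hA
  obtain ⟨q, hq, rfl⟩ := hB
  refine ⟨fun x => p x * q x, by fun_prop, ?_⟩
  ext x
  simp [mul_eq_zero]

lemma isZeroSet_univ : IsZeroSet (univ : Set X) :=
  ⟨fun _ => 0, continuous_const, by ext x; simp⟩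

lemma isZeroSet_empty : IsZeroSet (∅ : Set X) :=
  ⟨fun _ => 1, continuous_const, by ext x; simp⟩

lemma isZeroSet_biInter {ι : Type*} (s : Finset ι) (Z : ι → Set X)
    (h : ∀ i ∈ s, IsZeroSet (Z i)) : IsZeroSet (⋂ i ∈ s, Z i) := by
  classical
  induction s using Finset.induction with
  | empty => simpa using isZeroSet_univ
  | insert a s hni ih =>
    rw [Finset.set_biInter_insert]
    exact isZeroSet_inter (h a (Finset.mem_insert_self a s))
      (ih fun i hi => h i (Finset.mem_insert_of_mem hi))

lemma isZeroSet_iInter {ι : Type*} [Fintype ι] (Z : ι → Set X)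
    (h : ∀ i, IsZeroSet (Z i)) : IsZeroSet (⋂ i, Z i) := by
  have := isZeroSet_biInter (Finset.univ : Finset ι) Z (fun i _ => h i)
  simpa using this

lemma isZeroSet_biUnion {ι : Type*} (s : Finset ι) (Z : ι → Set X)
    (h : ∀ i ∈ s, IsZeroSet (Z i)) : IsZeroSet (⋃ i ∈ s, Z i) := by
  classical
  induction s using Finset.induction with
  | empty => simpa using isZeroSet_empty
  | insert a s hni ih =>
    rw [Finset.set_biUnion_insert]
    exact isZeroSet_union (h a (Finset.mem_insert_self a s))
      (ih fun i hi => h i (Finset.mem_insert_of_mem hi))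

lemma isZeroSet_iUnion_fintype {ι : Type*} [Fintype ι] (Z : ι → Set X)
    (h : ∀ i, IsZeroSet (Z i)) : IsZeroSet (⋃ i, Z i) := by
  have := isZeroSet_biUnion (Finset.univ : Finset ι) Z (fun i _ => h i)
  simpa using this

lemma completelySeparated_of_disjoint_zero {A B : Set X} (hA : IsZeroSet A)
    (hB : IsZeroSet B) (hd : A ∩ B = ∅) : CompletelySeparatedSets A B := by
  obtain ⟨p, hp, rfl⟩ := hA
  obtain ⟨q, hq, rfl⟩ := hB
  have hden : ∀ x, 0 < |p x| + |q x| := by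
    intro x
    rcases (abs_nonneg (p x)).lt_or_eq with h | h
    · positivity
    rcases (abs_nonneg (q x)).lt_or_eq with h' | h'
    · positivity
    · exfalso
      have hx : x ∈ (p ⁻¹' {0}) ∩ (q ⁻¹' {0}) :=
        ⟨abs_eq_zero.mp h.symm, abs_eq_zero.mp h'.symm⟩
      rw [hd] at hx; exact hx
  refine ⟨fun x => |p x| / (|p x| + |q x|), ?_, ?_, ?_, ?_⟩
  · exact (hp.abs).div (by fun_prop) (fun x => (hden x).ne')
  · intro x
    constructor
    · positivity
    · rw [div_le_one (hden x)]
      nlinarith [abs_nonneg (q x)]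
  · intro x hx
    simp only [mem_preimage, mem_singleton_iff] at hx
    simp [hx]
  · intro x hx
    simp only [mem_preimage, mem_singleton_iff] at hx
    have hq0 : |q x| = 0 := by simp [hx]
    have hp0 : |p x| ≠ 0 := by
      intro h0
      have := hden x
      rw [h0, hq0] at this
      simp at this
    show |p x| / (|p x| + |q x|) = 1
    rw [hq0, add_zero, div_self hp0]

end Aux

section Aux2
variable {X : Type*} [TopologicalSpace X]

lemma sep_clopen (hX : StronglyZeroDimensional X) {A B : Set X}
    (hA : IsZeroSet A) (hB : IsZeroSet B) (hd : A ∩ B = ∅) :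
    ∃ G : Set X, IsClopen G ∧ A ⊆ G ∧ G ∩ B = ∅ := by
  obtain ⟨G, hG, hAG, hGB⟩ := hX A B (completelySeparated_of_disjoint_zero hA hB hd)
  refine ⟨G, hG, hAG, ?_⟩
  rw [eq_empty_iff_forall_notMem]
  rintro x ⟨hxG, hxB⟩
  exact hGB hxG hxB

lemma discrete_mem_unique {ι : Type*} {U : ι → Set X} (h : IsDiscreteFamily U)
    {i j : ι} {x : X} (hi : x ∈ U i) (hj : x ∈ U j) : i = j := by
  obtain ⟨V, hV, hsub⟩ := h x
  have hxV : x ∈ V := mem_of_mem_nhds hV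
  exact hsub ⟨x, hi, hxV⟩ ⟨x, hj, hxV⟩

/-- For a zero set `A` inside a cozero set `U` (with `closure A ⊆ U`), there is a continuous
`γ : X → [0,1]` with `γ ⁻¹ {0} = A` and `γ = 1` off `U`. -/
lemma gamma_exists {A U : Set X} (hA : IsZeroSet A) (hU : IsCozeroSet U)
    (hcl : closure A ⊆ U) :
    ∃ γ : X → ℝ, Continuous γ ∧ (∀ x, γ x ∈ Icc (0:ℝ) 1) ∧
      (∀ x, γ x = 0 ↔ x ∈ A) ∧ (∀ x ∉ U, γ x = 1) := by
  obtain ⟨φ, hφ, hφA⟩ := hA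
  have hdisj : A ∩ Uᶜ = ∅ := by
    rw [eq_empty_iff_forall_notMem]
    rintro x ⟨hx1, hx2⟩
    exact hx2 (hcl (subset_closure hx1))
  obtain ⟨θ, hθc, hθ01, hθ0, hθ1⟩ :=
    completelySeparated_of_disjoint_zero ⟨φ, hφ, hφA⟩ hU hdisj
  refine ⟨fun x => min 1 (min 1 |φ x| + θ x), by fun_prop, ?_, ?_, ?_⟩
  · intro x
    have := (hθ01 x).1
    have h2 := (hθ01 x).2
    constructor
    · have : (0:ℝ) ≤ min 1 |φ x| := le_min zero_le_one (abs_nonneg _)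
      simp only [le_min_iff]
      constructor <;> nlinarith
    · exact min_le_left _ _
  · intro x
    have hθ0' := (hθ01 x).1
    have hmin : (0:ℝ) ≤ min 1 |φ x| := le_min zero_le_one (abs_nonneg _)
    constructor
    · intro h
      have hsum : min 1 |φ x| + θ x = 0 := by
        rcases min_eq_iff.mp h with ⟨h1, _⟩ | ⟨h1, _⟩
        · linarith [hmin, hθ0']
        · exact h1
      have : min 1 |φ x| = 0 := by linarith
      have : |φ x| = 0 := by
        rcases min_eq_iff.mp this with ⟨h1, _⟩ | ⟨h1, _⟩
        · linarith
        · exact h1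
      have : φ x = 0 := abs_eq_zero.mp this
      rw [hφA]; exact this
    · intro hx
      have h1 : φ x = 0 := by rw [hφA] at hx; exact hx
      have h2 : θ x = 0 := hθ0 x hx
      simp [h1, h2]
  · intro x hx
    have h1 : θ x = 1 := hθ1 x hx
    have hmin : (0:ℝ) ≤ min 1 |φ x| := le_min zero_le_one (abs_nonneg _)
    show min 1 (min 1 |φ x| + θ x) = 1
    rw [h1, min_eq_left]
    linarith

/-- union of an SFD family of zero sets is a zero set -/
lemma isZeroSet_iUnion_SFD {ι : Type*} {A U : ι → Set X}
    (hA : ∀ i, IsZeroSet (A i)) (hU : IsDiscreteFamily U)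
    (hcoz : ∀ i, IsCozeroSet (U i)) (hcl : ∀ i, closure (A i) ⊆ U i) :
    IsZeroSet (⋃ i, A i) := by
  classical
  choose γ hγc hγ01 hγ0 hγ1 using fun i => gamma_exists (hA i) (hcoz i) (hcl i)
  set h : X → ℝ := fun x => sInf (insert 1 (range fun i => γ i x)) with hh
  have hAU : ∀ i, A i ⊆ U i := fun i => (subset_closure).trans (hcl i)
  -- pointwise description
  have hval1 : ∀ x, (∀ i, x ∉ U i) → h x = 1 := by
    intro x hx
    have : insert 1 (range fun i => γ i x) = {1} := by
      apply Subset.antisymm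
      · rintro t ht
        rcases ht with rfl | ⟨i, rfl⟩
        · exact rfl
        · simp [hγ1 i x (hx i)]
      · intro t ht
        rcases ht with rfl
        exact mem_insert _ _
    rw [hh]; simp only; rw [this, csInf_singleton]
  have hval2 : ∀ x i₀, (∀ j, j ≠ i₀ → x ∉ U j) → h x = min 1 (γ i₀ x) := by
    intro x i₀ hx
    have hset : insert 1 (range fun i => γ i x) = {1, γ i₀ x} := by
      apply Subset.antisymm
      · rintro t ht
        rcases ht with rfl | ⟨i, rfl⟩
        · exact mem_insert _ _
        · by_cases hi : i = i₀
          · subst hi; right; rfl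
          · simp [hγ1 i x (hx i hi)]
      · rintro t (rfl | ht)
        · exact mem_insert _ _
        · rcases ht with rfl
          exact mem_insert_of_mem _ ⟨i₀, rfl⟩
    rw [hh]; simp only; rw [hset, csInf_pair]
  have hUdisj : ∀ x i j, x ∈ U i → x ∈ U j → i = j := fun x i j hi hj =>
    discrete_mem_unique hU hi hj
  refine ⟨h, ?_, ?_⟩
  · rw [continuous_iff_continuousAt]
    intro x
    obtain ⟨V, hV, hsub⟩ := hU x
    by_cases hex : ∃ i₀, (U i₀ ∩ V).Nonempty
    · obtain ⟨i₀, hi₀⟩ := hex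
      have heq : ∀ x' ∈ V, h x' = min 1 (γ i₀ x') := by
        intro x' hx'
        apply hval2
        intro j hj hxj
        exact hj (hsub ⟨x', hxj, hx'⟩ hi₀)
      have : ContinuousAt (fun x' => min 1 (γ i₀ x')) x := by fun_prop
      apply this.congr
      filter_upwards [hV] with x' hx'
      exact (heq x' hx').symm
    · have heq : ∀ x' ∈ V, h x' = 1 := by
        intro x' hx'
        apply hval1
        intro i hxi
        exact hex ⟨i, x', hxi, hx'⟩
      apply continuousAt_const.congr
      filter_upwards [hV] with x' hx'
      exact (heq x' hx').symm
  · ext x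
    simp only [mem_iUnion, mem_preimage, mem_singleton_iff]
    constructor
    · rintro ⟨i, hi⟩
      have hxU : x ∈ U i := hAU i hi
      have : h x = min 1 (γ i x) := hval2 x i (fun j hj hxj => hj (hUdisj x j i hxj hxU))
      rw [this, (hγ0 i x).mpr hi]
      simp
    · intro hx
      by_cases hex : ∃ i₀, x ∈ U i₀
      · obtain ⟨i₀, hi₀⟩ := hex
        have hv : h x = min 1 (γ i₀ x) := hval2 x i₀ (fun j hj hxj => hj (hUdisj x j i₀ hxj hi₀))
        rw [hx] at hv
        have hγval : γ i₀ x = 0 := by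
          rcases min_eq_iff.mp hv.symm with ⟨h1, _⟩ | ⟨h1, _⟩
          · norm_num at h1
          · exact h1
        exact ⟨i₀, (hγ0 i₀ x).mp hγval⟩
      · push_neg at hex
        rw [hval1 x hex] at hx
        norm_num at hx

lemma IsDiscreteFamily.restrict {ι κ : Type*} {U : ι → Set X} (h : IsDiscreteFamily U)
    (e : κ → ι) (he : Function.Injective e) : IsDiscreteFamily (fun k => U (e k)) := by
  intro x
  obtain ⟨V, hV, hs⟩ := h x
  exact ⟨V, hV, fun a ha b hb => he (hs ha hb)⟩

lemma isZeroSet_iUnion_SFD_subtype {ι : Type*} {P : ι → Prop} {A U : ι → Set X}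
    (hA : ∀ i, IsZeroSet (A i)) (hU : IsDiscreteFamily U)
    (hcoz : ∀ i, IsCozeroSet (U i)) (hcl : ∀ i, closure (A i) ⊆ U i) :
    IsZeroSet (⋃ i, ⋃ (_ : P i), A i) := by
  have heq : (⋃ i, ⋃ (_ : P i), A i) = ⋃ i : {i // P i}, A i.1 := by
    ext x
    simp only [mem_iUnion]
    constructor
    · rintro ⟨i, hi, hx⟩; exact ⟨⟨i, hi⟩, hx⟩
    · rintro ⟨⟨i, hi⟩, hx⟩; exact ⟨i, hi, hx⟩
  rw [heq]
  exact isZeroSet_iUnion_SFD (fun i => hA i.1)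
    (hU.restrict Subtype.val Subtype.val_injective)
    (fun i => hcoz i.1) (fun i => hcl i.1)

end Aux2

section Main

structure Setup (X Y : Type*) [TopologicalSpace X] [MetricSpace Y] where
  f : X → Y
  B : ℕ → Set (Set X)
  U : (n : ℕ) → (B n) → Set X
  hdisc : ∀ n, IsDiscreteFamily (U n)
  hcoz : ∀ n A, IsCozeroSet (U n A)
  hcl : ∀ n (A : B n), closure (A : Set X) ⊆ U n A
  hzero : ∀ n, ∀ A ∈ B n, IsZeroSet A
  hX : StronglyZeroDimensional X

namespace Setup

variable {X Y : Type*} [TopologicalSpace X] [MetricSpace Y] (S : Setup X Y)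

def Node (m : ℕ) : Type _ := Fin (m+1) → Σ n : ℕ, S.B n

def Eσ {m : ℕ} (σ : S.Node m) : Set X := ⋂ j, ((σ j).2 : Set X)

def Uσ {m : ℕ} (σ : S.Node m) : Set X := ⋂ j, S.U (σ j).1 (σ j).2

def Small (k : ℕ) (A : Set X) : Prop := ∃ y, ∀ a ∈ A, dist (S.f a) y < 1/((k:ℝ)+1)

def Adm (N : ℕ) {m : ℕ} (σ : S.Node m) : Prop :=
  (∀ j, (σ j).1 ≤ N) ∧ ∀ j : Fin (m+1), S.Small (j : ℕ) ((σ j).2 : Set X)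

lemma isZeroSet_E {m : ℕ} (σ : S.Node m) : IsZeroSet (S.Eσ σ) :=
  isZeroSet_iInter _ fun j => S.hzero _ _ (σ j).2.2

lemma E_subset_U {m : ℕ} (σ : S.Node m) : S.Eσ σ ⊆ S.Uσ σ := by
  intro x hx
  rw [Uσ, mem_iInter]
  intro j
  exact S.hcl _ _ (subset_closure (mem_iInter.mp hx j))

lemma closure_E_subset_U {m : ℕ} (σ : S.Node m) : closure (S.Eσ σ) ⊆ S.Uσ σ := by
  intro x hx
  rw [Uσ, mem_iInter]
  intro j
  exact S.hcl _ _ ((closure_mono (iInter_subset _ j)) hx)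

lemma isCozeroSet_U {m : ℕ} (σ : S.Node m) : IsCozeroSet (S.Uσ σ) := by
  show IsZeroSet _
  rw [Uσ, compl_iInter]
  exact isZeroSet_iUnion_fintype _ fun j => S.hcoz _ _

def node {m : ℕ} (ns : Fin (m+1) → ℕ) (p : ∀ j, S.B (ns j)) : S.Node m :=
  fun j => ⟨ns j, p j⟩

lemma discrete_prod (m : ℕ) (ns : Fin (m+1) → ℕ) :
    IsDiscreteFamily (fun p : (∀ j, S.B (ns j)) => ⋂ j, S.U (ns j) (p j)) := by
  intro x
  choose V hV hsub using fun j => S.hdisc (ns j) x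
  refine ⟨⋂ j, V j, iInter_mem.mpr hV, ?_⟩
  rintro p ⟨z, hz1, hz2⟩ p' ⟨z', hz1', hz2'⟩
  funext j
  exact hsub j ⟨z, mem_iInter.mp hz1 j, mem_iInter.mp hz2 j⟩
    ⟨z', mem_iInter.mp hz1' j, mem_iInter.mp hz2' j⟩

lemma D_eq (N m : ℕ) (σ₀ : S.Node m) :
    (⋃ τ : S.Node m, ⋃ (_ : S.Adm N τ ∧ S.Eσ τ ∩ S.Eσ σ₀ = ∅), S.Eσ τ)
      = ⋃ (ns : Fin (m+1) → Fin (N+1)), ⋃ (p : ∀ j, S.B ((ns j : ℕ))),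
          ⋃ (_ : S.Adm N (S.node (fun j => (ns j : ℕ)) p) ∧
              S.Eσ (S.node (fun j => (ns j : ℕ)) p) ∩ S.Eσ σ₀ = ∅),
            S.Eσ (S.node (fun j => (ns j : ℕ)) p) := by
  ext x
  simp only [mem_iUnion]
  constructor
  · rintro ⟨τ, ⟨hadm, hdisj⟩, hx⟩
    refine ⟨fun j => ⟨(τ j).1, Nat.lt_succ_of_le (hadm.1 j)⟩, fun j => (τ j).2, ?_, ?_⟩
    · exact ⟨hadm, hdisj⟩
    · exact hx
  · rintro ⟨ns, p, hcond, hx⟩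
    exact ⟨S.node (fun j => (ns j : ℕ)) p, hcond, hx⟩

lemma isZeroSet_D (N m : ℕ) (σ₀ : S.Node m) :
    IsZeroSet (⋃ τ : S.Node m, ⋃ (_ : S.Adm N τ ∧ S.Eσ τ ∩ S.Eσ σ₀ = ∅), S.Eσ τ) := by
  rw [S.D_eq N m σ₀]
  apply isZeroSet_iUnion_fintype
  intro ns
  apply isZeroSet_iUnion_SFD_subtype
    (U := fun p : (∀ j, S.B ((ns j : ℕ))) => ⋂ j, S.U (ns j) (p j))
  · intro p; exact S.isZeroSet_E _
  · exact S.discrete_prod m _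
  · intro p
    show IsZeroSet _
    rw [compl_iInter]
    exact isZeroSet_iUnion_fintype _ fun j => S.hcoz _ _
  · intro p
    exact S.closure_E_subset_U (S.node (fun j => (ns j : ℕ)) p)

lemma exG (N m : ℕ) (σ : S.Node m) :
    ∃ G : Set X, IsClopen G ∧ S.Eσ σ ⊆ G ∧
      (∀ τ : S.Node m, S.Adm N τ → S.Eσ τ ∩ S.Eσ σ = ∅ → G ∩ S.Eσ τ = ∅) ∧
      G ⊆ S.Uσ σ ∧ (S.Eσ σ = ∅ → G = ∅) := by
  by_cases hE : S.Eσ σ = ∅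
  · exact ⟨∅, isClopen_empty, by simp [hE], by simp, by simp, fun _ => rfl⟩
  · set D := ⋃ τ : S.Node m, ⋃ (_ : S.Adm N τ ∧ S.Eσ τ ∩ S.Eσ σ = ∅), S.Eσ τ with hD
    have hZ2 : IsZeroSet (D ∪ (S.Uσ σ)ᶜ) :=
      isZeroSet_union (S.isZeroSet_D N m σ) (S.isCozeroSet_U σ)
    have hdisj : S.Eσ σ ∩ (D ∪ (S.Uσ σ)ᶜ) = ∅ := by
      rw [eq_empty_iff_forall_notMem]
      rintro x ⟨hx1, hx2⟩
      rcases hx2 with hx2 | hx2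
      · simp only [hD, mem_iUnion] at hx2
        obtain ⟨τ, ⟨_, hdj⟩, hxτ⟩ := hx2
        rw [eq_empty_iff_forall_notMem] at hdj
        exact hdj x ⟨hxτ, hx1⟩
      · exact hx2 (S.E_subset_U σ hx1)
    obtain ⟨G, hGc, hEG, hGD⟩ := sep_clopen S.hX (S.isZeroSet_E σ) hZ2 hdisj
    refine ⟨G, hGc, hEG, ?_, ?_, fun h => absurd h hE⟩
    · intro τ hadm hdj
      rw [eq_empty_iff_forall_notMem]
      rintro x ⟨hxG, hxτ⟩
      rw [eq_empty_iff_forall_notMem] at hGD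
      refine hGD x ⟨hxG, Or.inl ?_⟩
      simp only [hD, mem_iUnion]
      exact ⟨τ, ⟨hadm, hdj⟩, hxτ⟩
    · intro x hxG
      by_contra hxU
      rw [eq_empty_iff_forall_notMem] at hGD
      exact hGD x ⟨hxG, Or.inr hxU⟩

noncomputable def Gs (N : ℕ) : (m : ℕ) → S.Node m → Set X
  | 0, σ => (S.exG N 0 σ).choose
  | (m+1), σ => (S.exG N (m+1) σ).choose ∩ Gs N m (fun j => σ j.castSucc)

lemma Gs_subset_choose (N : ℕ) : ∀ (m : ℕ) (σ : S.Node m),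
    S.Gs N m σ ⊆ (S.exG N m σ).choose
  | 0, σ => subset_rfl
  | (m+1), σ => inter_subset_left

lemma Gs_clopen (N : ℕ) : ∀ (m : ℕ) (σ : S.Node m), IsClopen (S.Gs N m σ)
  | 0, σ => (S.exG N 0 σ).choose_spec.1
  | (m+1), σ => ((S.exG N (m+1) σ).choose_spec.1).inter (Gs_clopen N m _)

lemma E_trunc_subset {m : ℕ} (σ : S.Node (m+1)) :
    S.Eσ σ ⊆ S.Eσ (fun j => σ j.castSucc) := by
  intro x hx
  exact mem_iInter.mpr fun j => mem_iInter.mp hx j.castSucc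

lemma Gs_subE (N : ℕ) : ∀ (m : ℕ) (σ : S.Node m), S.Eσ σ ⊆ S.Gs N m σ
  | 0, σ => (S.exG N 0 σ).choose_spec.2.1
  | (m+1), σ => subset_inter (S.exG N (m+1) σ).choose_spec.2.1
      ((S.E_trunc_subset σ).trans (Gs_subE N m _))

lemma Gs_sep (N m : ℕ) (σ : S.Node m) :
    ∀ τ : S.Node m, S.Adm N τ → S.Eσ τ ∩ S.Eσ σ = ∅ → S.Gs N m σ ∩ S.Eσ τ = ∅ := by
  intro τ hadm hdj
  have h := (S.exG N m σ).choose_spec.2.2.1 τ hadm hdj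
  rw [eq_empty_iff_forall_notMem] at h ⊢
  rintro x ⟨hx1, hx2⟩
  exact h x ⟨S.Gs_subset_choose N m σ hx1, hx2⟩

lemma Gs_subU (N m : ℕ) (σ : S.Node m) : S.Gs N m σ ⊆ S.Uσ σ :=
  (S.Gs_subset_choose N m σ).trans (S.exG N m σ).choose_spec.2.2.2.1

lemma Gs_empty (N m : ℕ) (σ : S.Node m) (h : S.Eσ σ = ∅) : S.Gs N m σ = ∅ := by
  have := (S.exG N m σ).choose_spec.2.2.2.2 h
  apply eq_empty_of_subset_empty
  rw [← this]
  exact S.Gs_subset_choose N m σ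

def truncLE {m M : ℕ} (h : m ≤ M) (σ : S.Node M) : S.Node m :=
  fun j => σ (j.castLE (by omega))

lemma E_truncLE_subset {m M : ℕ} (h : m ≤ M) (σ : S.Node M) :
    S.Eσ σ ⊆ S.Eσ (S.truncLE h σ) := by
  intro x hx
  exact mem_iInter.mpr fun j => mem_iInter.mp hx _

lemma Adm_truncLE {N m M : ℕ} (h : m ≤ M) {σ : S.Node M} (hadm : S.Adm N σ) :
    S.Adm N (S.truncLE h σ) :=
  ⟨fun j => hadm.1 _, fun j => hadm.2 (j.castLE (by omega))⟩

lemma Gs_truncLE_aux (N m : ℕ) : ∀ (k : ℕ) (σ : S.Node (m+k)),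
    S.Gs N (m+k) σ ⊆ S.Gs N m (S.truncLE (Nat.le_add_right m k) σ)
  | 0, σ => subset_rfl
  | (k+1), σ => (inter_subset_right).trans (Gs_truncLE_aux N m k (fun j => σ j.castSucc))

lemma Gs_truncLE (N : ℕ) {m M : ℕ} (h : m ≤ M) (σ : S.Node M) :
    S.Gs N M σ ⊆ S.Gs N m (S.truncLE h σ) := by
  obtain ⟨k, rfl⟩ : ∃ k, M = m + k := ⟨M - m, by omega⟩
  exact S.Gs_truncLE_aux N m k σ

def Sel (N : ℕ) (x : X) : Set (Σ m : ℕ, S.Node m) :=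
  {p | p.1 ≤ N ∧ S.Adm N p.2 ∧ x ∈ S.Gs N p.1 p.2}

open Classical in
noncomputable def ePt [Nonempty X] {m : ℕ} (σ : S.Node m) : X :=
  if h : (S.Eσ σ).Nonempty then h.choose else Classical.arbitrary X

lemma ePt_mem [Nonempty X] {m : ℕ} {σ : S.Node m} (h : (S.Eσ σ).Nonempty) :
    S.ePt σ ∈ S.Eσ σ := by
  classical
  rw [ePt, dif_pos h]
  exact h.choose_spec

noncomputable def selSup (T : Set (Σ m : ℕ, S.Node m)) : ℕ :=
  sSup {m | ∃ σ : S.Node m, (⟨m, σ⟩ : Σ m, S.Node m) ∈ T}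

open Classical in
noncomputable def gOf [Nonempty X] (y₀ : Y) (T : Set (Σ m : ℕ, S.Node m)) : Y :=
  if h : ∃ σ : S.Node (S.selSup T), (⟨S.selSup T, σ⟩ : Σ m, S.Node m) ∈ T
  then S.f (S.ePt h.choose) else y₀

lemma gOf_spec [Nonempty X] (y₀ : Y) (T : Set (Σ m : ℕ, S.Node m)) (N m : ℕ)
    (hbdd : ∀ p ∈ T, p.1 ≤ N) (σ : S.Node m) (hσ : (⟨m, σ⟩ : Σ m, S.Node m) ∈ T) :
    ∃ (M : ℕ) (τ : S.Node M), m ≤ M ∧ (⟨M, τ⟩ : Σ m, S.Node m) ∈ T ∧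
      S.gOf y₀ T = S.f (S.ePt τ) := by
  classical
  set Q := {m | ∃ σ : S.Node m, (⟨m, σ⟩ : Σ m, S.Node m) ∈ T} with hQ
  have hQb : BddAbove Q := ⟨N, by rintro k ⟨σ', hσ'⟩; exact hbdd _ hσ'⟩
  have hQne : Q.Nonempty := ⟨m, σ, hσ⟩
  have hM : S.selSup T ∈ Q := Nat.sSup_mem hQne hQb
  obtain ⟨τ₀, hτ₀⟩ := hM
  have hcond : ∃ σ : S.Node (S.selSup T), (⟨S.selSup T, σ⟩ : Σ m, S.Node m) ∈ T := ⟨τ₀, hτ₀⟩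
  refine ⟨S.selSup T, hcond.choose, ?_, hcond.choose_spec, ?_⟩
  · exact le_csSup hQb ⟨σ, hσ⟩
  · rw [gOf, dif_pos hcond]

noncomputable def g [Nonempty X] (N : ℕ) (y₀ : Y) (x : X) : Y := S.gOf y₀ (S.Sel N x)

lemma pair_eq (a b : Σ n : ℕ, S.B n) (h1 : a.1 = b.1) {V : ℕ → Set X}
    (hsub : ∀ n, {A : S.B n | (S.U n A ∩ V n).Nonempty}.Subsingleton)
    (hA : (S.U a.1 a.2 ∩ V a.1).Nonempty) (hB : (S.U b.1 b.2 ∩ V b.1).Nonempty) : a = b := by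
  obtain ⟨n, A⟩ := a
  obtain ⟨n', A'⟩ := b
  dsimp at h1
  subst h1
  have h2 : A = A' := hsub n hA hB
  subst h2
  rfl

lemma sel_locally_constant (N : ℕ) (x : X) :
    ∃ V ∈ 𝓝 x, ∀ x' ∈ V, S.Sel N x' = S.Sel N x := by
  classical
  choose V0f hV0f hsub using fun n => S.hdisc n x
  set V₀ : Set X := ⋂ n ∈ Finset.range (N+1), V0f n with hV₀def
  have hV₀ : V₀ ∈ 𝓝 x := by
    rw [hV₀def]
    exact (Filter.biInter_finset_mem _).mpr fun n _ => hV0f n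
  have hV₀sub : ∀ n, n ≤ N → V₀ ⊆ V0f n := by
    intro n hn y hy
    exact mem_iInter₂.mp hy n (Finset.mem_range.mpr (Nat.lt_succ_of_le hn))
  -- uniqueness of same-shape admissible nodes whose G meets V₀
  have huniq : ∀ (m : ℕ) (σ τ : S.Node m), S.Adm N σ → S.Adm N τ →
      (∀ j, (σ j).1 = (τ j).1) → (S.Gs N m σ ∩ V₀).Nonempty →
      (S.Gs N m τ ∩ V₀).Nonempty → σ = τ := by
    intro m σ τ hadmσ hadmτ hsh ⟨z, hz1, hz2⟩ ⟨w, hw1, hw2⟩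
    funext j
    have hzU : z ∈ S.U (σ j).1 (σ j).2 := mem_iInter.mp (S.Gs_subU N m σ hz1) j
    have hwU : w ∈ S.U (τ j).1 (τ j).2 := mem_iInter.mp (S.Gs_subU N m τ hw1) j
    refine S.pair_eq (σ j) (τ j) (hsh j)
      (V := V0f) (fun n => hsub n) ?_ ?_
    · exact ⟨z, hzU, hV₀sub _ (hadmσ.1 j) hz2⟩
    · exact ⟨w, hwU, hV₀sub _ (hadmτ.1 j) hw2⟩
  -- index type for candidate classes
  let T := Σ m : Fin (N+1), (Fin ((m:ℕ)+1) → Fin (N+1))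
  let C : (t : T) → Set (S.Node (t.1:ℕ)) := fun t =>
    {σ : S.Node (t.1:ℕ) | S.Adm N σ ∧ (∀ j, (σ j).1 = (t.2 j : ℕ)) ∧
      (S.Gs N (t.1:ℕ) σ ∩ V₀).Nonempty}
  have hCsub : ∀ t, (C t).Subsingleton := by
    intro t σ hσ τ hτ
    exact huniq _ σ τ hσ.1 hτ.1 (fun j => (hσ.2.1 j).trans (hτ.2.1 j).symm) hσ.2.2 hτ.2.2
  let W : T → Set X := fun t =>
    if h : ∃ σ, σ ∈ C t then
      (if x ∈ S.Gs N (t.1:ℕ) h.choose then S.Gs N (t.1:ℕ) h.choose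
       else (S.Gs N (t.1:ℕ) h.choose)ᶜ)
    else univ
  have hW : ∀ t, W t ∈ 𝓝 x := by
    intro t
    show (if h : ∃ σ, σ ∈ C t then _ else univ) ∈ 𝓝 x
    split
    · next h =>
      split
      · next hx => exact (S.Gs_clopen N _ _).2.mem_nhds hx
      · next hx => exact ((S.Gs_clopen N _ _).compl.2).mem_nhds hx
    · exact univ_mem
  refine ⟨V₀ ∩ ⋂ t, W t, inter_mem hV₀ (Filter.iInter_mem.mpr hW), ?_⟩
  rintro x' ⟨hx'V₀, hx'W⟩
  ext p
  obtain ⟨m, σ⟩ := p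
  simp only [Sel, mem_setOf_eq]
  by_cases hm : m ≤ N
  · by_cases hadm : S.Adm N σ
    · simp only [hm, hadm, true_and]
      -- the candidate class of σ
      let t : T := ⟨⟨m, Nat.lt_succ_of_le hm⟩, fun j => ⟨(σ j).1, Nat.lt_succ_of_le (hadm.1 j)⟩⟩
      have hWt : x' ∈ W t := mem_iInter.mp hx'W t
      have hxV₀ : x ∈ V₀ := mem_of_mem_nhds hV₀
      constructor
      · intro hx'G
        have hσC : σ ∈ C t := ⟨hadm, fun j => rfl, ⟨x', hx'G, hx'V₀⟩⟩
        have hex : ∃ τ, τ ∈ C t := ⟨σ, hσC⟩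
        have hchoose : hex.choose = σ := hCsub t hex.choose_spec hσC
        by_cases hxG : x ∈ S.Gs N m σ
        · exact hxG
        · exfalso
          have : W t = (S.Gs N (t.1:ℕ) hex.choose)ᶜ := by
            show (if h : ∃ σ, σ ∈ C t then _ else univ) = _
            rw [dif_pos hex, if_neg]
            rw [hchoose]
            exact hxG
          rw [this, hchoose] at hWt
          exact hWt hx'G
      · intro hxG
        have hσC : σ ∈ C t := ⟨hadm, fun j => rfl, ⟨x, hxG, hxV₀⟩⟩
        have hex : ∃ τ, τ ∈ C t := ⟨σ, hσC⟩
        have hchoose : hex.choose = σ := hCsub t hex.choose_spec hσC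
        have : W t = S.Gs N (t.1:ℕ) hex.choose := by
          show (if h : ∃ σ, σ ∈ C t then _ else univ) = _
          rw [dif_pos hex, if_pos]
          rw [hchoose]
          exact hxG
        rw [this, hchoose] at hWt
        exact hWt
    · simp [hadm]
  · simp [hm]

lemma g_continuous [Nonempty X] (N : ℕ) (y₀ : Y) : Continuous (S.g N y₀) := by
  rw [continuous_iff_continuousAt]
  intro x
  obtain ⟨V, hV, hloc⟩ := S.sel_locally_constant N x
  apply continuousAt_const.congr
  filter_upwards [hV] with x' hx'
  show S.g N y₀ x = S.g N y₀ x'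
  unfold g
  rw [hloc x' hx']

lemma small_exists (hbase : IsBaseFor (⋃ n, S.B n) S.f) (x : X) (k : ℕ) :
    ∃ (n : ℕ) (A : S.B n), x ∈ (A : Set X) ∧ S.Small k (A : Set X) := by
  obtain ⟨𝓢, h𝓢sub, h𝓢⟩ := hbase (Metric.ball (S.f x) (1/((k:ℝ)+1))) Metric.isOpen_ball
  have hx : x ∈ S.f ⁻¹' Metric.ball (S.f x) (1/((k:ℝ)+1)) := by
    simp only [mem_preimage, Metric.mem_ball, dist_self]
    positivity
  rw [h𝓢] at hx
  obtain ⟨A, hA𝓢, hxA⟩ := hx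
  obtain ⟨n, hAn⟩ : ∃ n, A ∈ S.B n := by
    have := h𝓢sub hA𝓢
    simpa using this
  refine ⟨n, ⟨A, hAn⟩, hxA, S.f x, ?_⟩
  intro a ha
  have : a ∈ S.f ⁻¹' Metric.ball (S.f x) (1/((k:ℝ)+1)) := by
    rw [h𝓢]
    exact ⟨A, hA𝓢, ha⟩
  simpa [Metric.mem_ball, dist_comm] using this

lemma g_tendsto [Nonempty X] (hbase : IsBaseFor (⋃ n, S.B n) S.f) (y₀ : Y) (x : X) :
    Tendsto (fun N => S.g N y₀ x) atTop (𝓝 (S.f x)) := by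
  rw [Metric.tendsto_atTop]
  intro ε hε
  obtain ⟨m, hm⟩ := exists_nat_gt (4/ε)
  have hmε : 4/((m:ℝ)+1) < ε := by
    rw [div_lt_iff₀ (by positivity)]
    have h4 : 4/ε < (m:ℝ)+1 := hm.trans (by linarith)
    rw [div_lt_iff₀ hε] at h4
    linarith
  choose nb Ab hxA hsm using fun k => S.small_exists hbase x k
  set σs : S.Node m := fun j => ⟨nb (j:ℕ), Ab (j:ℕ)⟩ with hσs
  set N₀ : ℕ := max m (Finset.univ.sup fun j : Fin (m+1) => nb (j:ℕ)) with hN₀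
  refine ⟨N₀, fun N hN => ?_⟩
  have hmN : m ≤ N := le_trans (le_max_left _ _) hN
  have hadm : S.Adm N σs := by
    constructor
    · intro j
      have h1 : nb (j:ℕ) ≤ Finset.univ.sup fun j : Fin (m+1) => nb (j:ℕ) :=
        Finset.le_sup (f := fun j : Fin (m+1) => nb (j:ℕ)) (Finset.mem_univ j)
      have h2 : (Finset.univ.sup fun j : Fin (m+1) => nb (j:ℕ)) ≤ N₀ := le_max_right _ _
      exact le_trans (le_trans h1 h2) hN
    · intro j
      exact hsm (j:ℕ)
  have hxE : x ∈ S.Eσ σs := mem_iInter.mpr fun j => hxA (j:ℕ)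
  have hself : (⟨m, σs⟩ : Σ m, S.Node m) ∈ S.Sel N x :=
    ⟨hmN, hadm, S.Gs_subE N m σs hxE⟩
  obtain ⟨M, τ, hmM, hτSel, hgval⟩ :=
    S.gOf_spec y₀ (S.Sel N x) N m (fun p hp => hp.1) σs hself
  obtain ⟨hMN, hadmτ, hxGτ⟩ := hτSel
  -- pass to level-m ancestor
  set ρ : S.Node m := S.truncLE hmM τ with hρ
  have hxGρ : x ∈ S.Gs N m ρ := S.Gs_truncLE N hmM τ hxGτ
  have hadmρ : S.Adm N ρ := S.Adm_truncLE hmM hadmτ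
  -- E ρ meets E σs
  obtain ⟨z, hzσ, hzρ⟩ : ∃ z, z ∈ S.Eσ σs ∧ z ∈ S.Eσ ρ := by
    by_contra hcon
    push_neg at hcon
    have hdj : S.Eσ σs ∩ S.Eσ ρ = ∅ := by
      rw [eq_empty_iff_forall_notMem]
      rintro w ⟨hw1, hw2⟩
      exact hcon w hw1 hw2
    have := S.Gs_sep N m ρ σs hadm hdj
    rw [eq_empty_iff_forall_notMem] at this
    exact this x ⟨hxGρ, hxE⟩
  -- the approximation point
  have hEτne : (S.Eσ τ).Nonempty := by
    by_contra hcon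
    rw [not_nonempty_iff_eq_empty] at hcon
    have := S.Gs_empty N M τ hcon
    rw [this] at hxGτ
    exact hxGτ
  have haE : S.ePt τ ∈ S.Eσ τ := S.ePt_mem hEτne
  have haρ : S.ePt τ ∈ S.Eσ ρ := S.E_truncLE_subset hmM τ haE
  -- small sets bounds
  have hbound : ∀ (σ' : S.Node m), S.Adm N σ' → ∀ a b, a ∈ S.Eσ σ' → b ∈ S.Eσ σ' →
      dist (S.f a) (S.f b) < 2/((m:ℝ)+1) := by
    intro σ' hadm' a b ha hb
    obtain ⟨y, hy⟩ := hadm'.2 (Fin.last m)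
    have h1 := hy a (mem_iInter.mp ha (Fin.last m))
    have h2 := hy b (mem_iInter.mp hb (Fin.last m))
    rw [Fin.val_last] at h1 h2
    calc dist (S.f a) (S.f b) ≤ dist (S.f a) y + dist y (S.f b) := dist_triangle _ _ _
      _ < 1/((m:ℝ)+1) + 1/((m:ℝ)+1) := by rw [dist_comm y]; exact add_lt_add h1 h2
      _ = 2/((m:ℝ)+1) := by ring
  have hb1 : dist (S.f (S.ePt τ)) (S.f z) < 2/((m:ℝ)+1) :=
    hbound ρ hadmρ _ _ haρ hzρ
  have hb2 : dist (S.f z) (S.f x) < 2/((m:ℝ)+1) :=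
    hbound σs hadm _ _ hzσ hxE
  have : dist (S.g N y₀ x) (S.f x) < 4/((m:ℝ)+1) := by
    rw [show S.g N y₀ x = S.f (S.ePt τ) from hgval]
    calc dist (S.f (S.ePt τ)) (S.f x)
        ≤ dist (S.f (S.ePt τ)) (S.f z) + dist (S.f z) (S.f x) := dist_triangle _ _ _
      _ < 2/((m:ℝ)+1) + 2/((m:ℝ)+1) := add_lt_add hb1 hb2
      _ = 4/((m:ℝ)+1) := by ring
  exact this.trans hmε

end Setup

end Main


theorem stmt10 {X Y : Type*} [TopologicalSpace X] [TopologicalSpace Y]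
    [TopologicalSpace.MetrizableSpace Y] (hX : StronglyZeroDimensional X)
    (f : X → Y) (hf : MemSigmaF0 f) : MemB1 f := by
  obtain ⟨𝓑, hSFD, hzero, hbase⟩ := hf
  letI : MetricSpace Y := TopologicalSpace.metrizableSpaceMetric Y
  rcases isEmpty_or_nonempty X with hE | hNE
  · refine ⟨fun _ => f, fun n => ?_, fun x => (hE.false x).elim⟩
    rw [continuous_iff_continuousAt]
    intro x
    exact (hE.false x).elim
  · have hSFD' : ∀ n, ∃ U : (𝓑 n) → Set X, IsDiscreteFamily U ∧ (∀ A, IsCozeroSet (U A)) ∧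
        ∀ A : (𝓑 n), closure (A : Set X) ⊆ U A := fun n => hSFD n
    choose U hdisc hcoz hcl using hSFD'
    let S : Setup X Y := ⟨f, 𝓑, U, hdisc, hcoz, hcl, hzero, hX⟩
    exact ⟨fun N => S.g N (f (Classical.arbitrary X)),
      fun N => S.g_continuous N _,
      fun x => S.g_tendsto hbase _ x⟩
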